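/- Every reduced multiplicative lattice is 0-distributive, i.e., if a ∧ b = 0 and a ∧ c = 0 then a ∧ (b ∨ c) = 0. -/

import Mathlib

variable {α : Type*}

/-- Iterated product `a^n` in a multiplicative lattice (with `a^0 = ⊤`). -/
def mpow [CompleteLattice α] (mul : α → α → α) (a : α) : ℕ → α
  | 0 => ⊤
  | n + 1 => mul a (mpow mul a n)

/-- `mul` makes the complete lattice `α` into a multiplicative lattice. -/
def IsMulLattice [CompleteLattice α] (mul : α → α → α) : Prop :=
  (∀ a b : α, mul a b = mul b a) ∧
  (∀ a b c : α, mul (mul a b) c = mul a (mul b c)) ∧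
  (∀ (a : α) (s : Set α), mul a (sSup s) = ⨆ b ∈ s, mul a b) ∧
  (∀ a b : α, mul a b ≤ a ⊓ b) ∧
  (∀ a : α, mul a ⊤ = a)

/-- The multiplicative lattice is reduced: the only nilpotent element is `⊥`. -/
def LatReduced [CompleteLattice α] (mul : α → α → α) : Prop :=
  ∀ (a : α) (n : ℕ), mpow mul a (n + 1) = ⊥ → a = ⊥

/-- `a* = sup {x | x·a = 0}`. -/
def starAnn [CompleteLattice α] (mul : α → α → α) (a : α) : α :=
  sSup {x : α | mul x a = ⊥}

/-- A prime element of a multiplicative lattice. -/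
def IsPrimeElt [CompleteLattice α] (mul : α → α → α) (p : α) : Prop :=
  p ≠ ⊤ ∧ ∀ a b : α, mul a b ≤ p → a ≤ p ∨ b ≤ p

/-- The zero-divisor graph `Γᵐ(L)` of a multiplicative lattice. -/
def zdg [CompleteLattice α] (mul : α → α → α) : SimpleGraph α where
  Adj a b := a ≠ b ∧ a ≠ ⊥ ∧ b ≠ ⊥ ∧ mul a b = ⊥ ∧ mul b a = ⊥
  symm := ⟨fun a b h => ⟨h.1.symm, h.2.2.1, h.2.1, h.2.2.2.2, h.2.2.2.1⟩⟩
  loopless := ⟨fun a h => h.1 rfl⟩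

/-- `Clique(Γᵐ(L)) < ∞`. -/
def CliqueBounded [CompleteLattice α] (mul : α → α → α) : Prop :=
  ∃ N : ℕ, ∀ s : Finset α, (zdg mul).IsClique ↑s → s.card ≤ N

theorem reduced_is_zero_distributive [CompleteLattice α] (mul : α → α → α)
    (hL : IsMulLattice mul) (hred : LatReduced mul) :
    ∀ a b c : α, a ⊓ b = ⊥ → a ⊓ c = ⊥ → a ⊓ (b ⊔ c) = ⊥ := by
  obtain ⟨hcomm, hassoc, hdist, hle, htop⟩ := hL
  have hmono2 : ∀ x y z : α, y ≤ z → mul x y ≤ mul x z := by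
    intro x y z hyz
    have : mul x (sSup {y, z}) = ⨆ b ∈ ({y, z} : Set α), mul x b := hdist x {y, z}
    have hs : sSup ({y, z} : Set α) = z := by
      rw [sSup_insert, csSup_singleton, sup_eq_right.2 hyz]
    rw [hs] at this
    rw [this]
    exact le_biSup _ (by simp)
  intro a b c hab hac
  set d := a ⊓ (b ⊔ c) with hd
  have h1 : mul a (b ⊔ c) = ⊥ := by
    have : mul a (sSup {b, c}) = ⨆ x ∈ ({b, c} : Set α), mul a x := hdist a {b, c}
    rw [sSup_insert, csSup_singleton] at this
    rw [this]
    apply le_bot_iff.mp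
    apply iSup₂_le
    intro x hx
    simp only [Set.mem_insert_iff, Set.mem_singleton_iff] at hx
    rcases hx with rfl | rfl
    · exact (hle a _).trans hab.le
    · exact (hle a _).trans hac.le
  have h2 : mul d d = ⊥ := by
    apply le_bot_iff.mp
    calc mul d d ≤ mul d (b ⊔ c) := hmono2 _ _ _ inf_le_right
    _ = mul (b ⊔ c) d := hcomm _ _
    _ ≤ mul (b ⊔ c) a := hmono2 _ _ _ inf_le_left
    _ = mul a (b ⊔ c) := hcomm _ _
    _ = ⊥ := h1
  apply hred d 1
  show mul d (mul d ⊤) = ⊥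
  rw [htop, h2]
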